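/- Let (P_t)_{t≥0} be a sub-Markovian semigroup on a measurable space E (so P_t 1_E(x) = P_x(t < τ_∂)), satisfying the two-sided estimate c⁻¹ f(x) μ(·) ≤ δ_x P_{t0}(·) ≤ c f(x) μ(·) with μ a probability measure and ‖f‖_∞ ≤ c. Then for every probability measure π on E, every z ∈ E and every t ≥ 0, one has P_π(t < τ_∂) ≥ c⁻³ π(f) P_z(t < τ_∂), where P_π(t < τ_∂) = ∫ P_t 1_E(x) π(dx). -/

import Mathlib

open MeasureTheory Set

theorem survival_lower_bound_under_two_sided_estimate
    {E : Type*} [MeasurableSpace E]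
    (t0 c : ℝ) (ht0 : 0 < t0) (hc : 0 < c)
    (μ : Measure E) [IsProbabilityMeasure μ]
    (f : E → ℝ) (hf_meas : Measurable f) (hf_pos : ∀ x, 0 < f x)
    (hf_bdd : ∀ x, f x ≤ c)
    (P : ℝ → E → Measure E)
    (hP_meas : ∀ t, ∀ A : Set E, MeasurableSet A → Measurable (fun x => P t x A))
    (hP_sub : ∀ t, 0 ≤ t → ∀ x, P t x Set.univ ≤ 1)
    (h_semigroup : ∀ s t, 0 ≤ s → 0 ≤ t → ∀ x, ∀ A : Set E, MeasurableSet A →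
      P (s + t) x A = ∫⁻ y, P t y A ∂(P s x))
    (h_mono : ∀ s t, 0 ≤ s → s ≤ t → ∀ x, P t x Set.univ ≤ P s x Set.univ)
    (h_tse : ∀ x, ∀ A : Set E, MeasurableSet A →
      ENNReal.ofReal (c⁻¹ * f x) * μ A ≤ P t0 x A ∧
      P t0 x A ≤ ENNReal.ofReal (c * f x) * μ A) :
    ∀ π : Measure E, IsProbabilityMeasure π → ∀ z : E, ∀ t, 0 ≤ t →
      ENNReal.ofReal (c⁻¹ ^ 3 * ∫ x, f x ∂π) * P t z Set.univ ≤
        ∫⁻ x, P t x Set.univ ∂π := by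
  intro π hπ z t ht
  -- E is nonempty
  have hne : Nonempty E := by
    by_contra h
    have : (μ : Measure E) Set.univ = 0 := by
      have : (Set.univ : Set E) = ∅ := by
        simp [Set.eq_empty_iff_forall_notMem]; exact fun x => (h ⟨x⟩)
      simp [this]
    simp [measure_univ] at this
  obtain ⟨x0⟩ := hne
  -- c ≥ 1
  have hc1 : (1 : ℝ) ≤ c := by
    have h1 := (h_tse x0 Set.univ MeasurableSet.univ).1
    have h2 := (h_tse x0 Set.univ MeasurableSet.univ).2
    have h3 : ENNReal.ofReal (c⁻¹ * f x0) ≤ ENNReal.ofReal (c * f x0) := by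
      have := le_trans h1 h2
      simpa [measure_univ] using this
    have h4 : c⁻¹ * f x0 ≤ c * f x0 :=
      (ENNReal.ofReal_le_ofReal_iff (mul_nonneg hc.le (hf_pos x0).le)).1 h3
    have h5 : c⁻¹ ≤ c := le_of_mul_le_mul_right h4 (hf_pos x0)
    nlinarith [inv_pos.mpr hc, mul_le_mul_of_nonneg_left h5 hc.le,
      mul_inv_cancel₀ hc.ne']
  have hfint : Integrable f π := by
    have : ∀ x, ‖f x‖ ≤ c := fun x => by
      rw [Real.norm_eq_abs, abs_of_pos (hf_pos x)]; exact hf_bdd x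
    exact (integrable_const c).mono' hf_meas.aestronglyMeasurable
      (Filter.Eventually.of_forall this)
  have hfI0 : 0 ≤ ∫ x, f x ∂π := integral_nonneg fun x => (hf_pos x).le
  -- lower measure bound as measure inequality
  have h_low : ∀ x, (ENNReal.ofReal (c⁻¹ * f x)) • μ ≤ P t0 x := by
    intro x
    rw [Measure.le_iff]
    intro A hA
    simpa [Measure.smul_apply, smul_eq_mul] using (h_tse x A hA).1
  have h_up : ∀ x, P t0 x ≤ (ENNReal.ofReal (c * f x)) • μ := by
    intro x
    rw [Measure.le_iff]
    intro A hA
    simpa [Measure.smul_apply, smul_eq_mul] using (h_tse x A hA).2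
  -- key: lintegral of ofReal (c⁻¹ * f) over π
  have hofReal : ∫⁻ x, ENNReal.ofReal (c⁻¹ * f x) ∂π
      = ENNReal.ofReal (c⁻¹ * ∫ x, f x ∂π) := by
    rw [← integral_const_mul]
    rw [← MeasureTheory.ofReal_integral_eq_lintegral_ofReal
      (hfint.const_mul _)
      (Filter.Eventually.of_forall fun x =>
        mul_nonneg (inv_nonneg.mpr hc.le) (hf_pos x).le)]
  rcases le_or_gt t t0 with hle | hlt
  · -- t ≤ t0 case
    have hstep : ∀ x, ENNReal.ofReal (c⁻¹ * f x) ≤ P t x Set.univ := by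
      intro x
      calc ENNReal.ofReal (c⁻¹ * f x)
          = ENNReal.ofReal (c⁻¹ * f x) * μ Set.univ := by simp [measure_univ]
        _ ≤ P t0 x Set.univ := (h_tse x Set.univ MeasurableSet.univ).1
        _ ≤ P t x Set.univ := h_mono t t0 ht hle x
    calc ENNReal.ofReal (c⁻¹ ^ 3 * ∫ x, f x ∂π) * P t z Set.univ
        ≤ ENNReal.ofReal (c⁻¹ ^ 3 * ∫ x, f x ∂π) * 1 :=
          mul_le_mul_right (hP_sub t ht z) _
      _ = ENNReal.ofReal (c⁻¹ ^ 3 * ∫ x, f x ∂π) := mul_one _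
      _ ≤ ENNReal.ofReal (c⁻¹ * ∫ x, f x ∂π) := by
          apply ENNReal.ofReal_le_ofReal
          have : c⁻¹ ^ 3 ≤ c⁻¹ := by
            have hci : c⁻¹ ≤ 1 := inv_le_one_of_one_le₀ hc1
            have hci0 : 0 ≤ c⁻¹ := inv_nonneg.mpr hc.le
            simpa using pow_le_pow_of_le_one hci0 hci (by norm_num : 1 ≤ 3)
          exact mul_le_mul_of_nonneg_right this hfI0
      _ = ∫⁻ x, ENNReal.ofReal (c⁻¹ * f x) ∂π := hofReal.symm
      _ ≤ ∫⁻ x, P t x Set.univ ∂π := lintegral_mono fun x => hstep x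
  · -- t > t0 case
    set s := t - t0 with hs
    have hs0 : 0 ≤ s := by simp [hs]; linarith
    have hts : t = t0 + s := by ring
    set M := ∫⁻ y, P s y Set.univ ∂μ with hM
    have hSmeas : Measurable fun y => P s y Set.univ :=
      hP_meas s Set.univ MeasurableSet.univ
    have hdecomp : ∀ x, P t x Set.univ = ∫⁻ y, P s y Set.univ ∂(P t0 x) := by
      intro x
      rw [hts]
      exact h_semigroup t0 s ht0.le hs0 x Set.univ MeasurableSet.univ
    have h_lowI : ∀ x, ENNReal.ofReal (c⁻¹ * f x) * M ≤ P t x Set.univ := by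
      intro x
      rw [hdecomp x]
      calc ENNReal.ofReal (c⁻¹ * f x) * M
          = ∫⁻ y, P s y Set.univ ∂((ENNReal.ofReal (c⁻¹ * f x)) • μ) := by
            rw [lintegral_smul_measure, smul_eq_mul]
        _ ≤ _ := lintegral_mono' (h_low x) le_rfl
    have h_upI : P t z Set.univ ≤ ENNReal.ofReal (c ^ 2) * M := by
      rw [hdecomp z]
      calc ∫⁻ y, P s y Set.univ ∂(P t0 z)
          ≤ ∫⁻ y, P s y Set.univ ∂((ENNReal.ofReal (c * f z)) • μ) :=
            lintegral_mono' (h_up z) le_rfl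
        _ = ENNReal.ofReal (c * f z) * M := by rw [lintegral_smul_measure, smul_eq_mul]
        _ ≤ ENNReal.ofReal (c ^ 2) * M := by
            apply mul_le_mul_left
            apply ENNReal.ofReal_le_ofReal
            have := hf_bdd z
            nlinarith
    have hmain : ENNReal.ofReal (c⁻¹ * ∫ x, f x ∂π) * M
        ≤ ∫⁻ x, P t x Set.univ ∂π := by
      calc ENNReal.ofReal (c⁻¹ * ∫ x, f x ∂π) * M
          = (∫⁻ x, ENNReal.ofReal (c⁻¹ * f x) ∂π) * M := by rw [hofReal]
        _ = ∫⁻ x, ENNReal.ofReal (c⁻¹ * f x) * M ∂π := by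
            rw [lintegral_mul_const]
            exact (ENNReal.measurable_ofReal.comp
              ((measurable_const.mul hf_meas)))
        _ ≤ ∫⁻ x, P t x Set.univ ∂π := lintegral_mono fun x => h_lowI x
    calc ENNReal.ofReal (c⁻¹ ^ 3 * ∫ x, f x ∂π) * P t z Set.univ
        ≤ ENNReal.ofReal (c⁻¹ ^ 3 * ∫ x, f x ∂π) * (ENNReal.ofReal (c ^ 2) * M) :=
          mul_le_mul_right h_upI _
      _ = (ENNReal.ofReal (c⁻¹ ^ 3 * ∫ x, f x ∂π) * ENNReal.ofReal (c ^ 2)) * M := by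
          ring
      _ = ENNReal.ofReal (c⁻¹ * ∫ x, f x ∂π) * M := by
          rw [← ENNReal.ofReal_mul (by positivity)]
          congr 1
          field_simp
      _ ≤ ∫⁻ x, P t x Set.univ ∂π := hmain
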